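/- Let h̄ > 0, 0 < λ₂ ≤ λ_N, 0 < μ₁ < μ₂, and suppose k₁, k₂ satisfy: 2(μ₂−μ₁)/(h̄λ_N(μ₁+μ₂+h̄)) > k₁ > 0; min{2/(h̄λ_N), 4/(λ_N(2μ₁+h̄))} > k₂ > 4/(λ₂(μ₁+μ₂)); 4/(λ_N(μ₁+μ₂+h̄)) > k₂ − k₁ > 0. Then for all h ∈ (0, h̄) and λ ∈ [λ₂, λ_N], the matrix Ŝ(h,λ) = [[1 − hλγk₁/2, 2h/(μ₂−μ₁) − hλγk₂/2], [−hλk₁/2, 1 − hλk₂/2]], with γ = (μ₁+μ₂+h)/(μ₂−μ₁), satisfies max{|s₁₁|+|s₁₂|, |s₁₁|+|s₂₁|, |s₂₂|+|s₁₂|, |s₂₂|+|s₂₁|} < 1, and hence σ̄(Ŝ(h,λ)) < 1. -/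

import Mathlib

/-- The largest singular value of a square real matrix. -/
noncomputable def sigmaMax {m : Type*} [Fintype m] [DecidableEq m]
    (A : Matrix m m ℝ) : ℝ :=
  ‖Matrix.toEuclideanCLM (𝕜 := ℝ) A‖

lemma cs_step (a b x y p q : ℝ) (ha : |p| = a) (hb : |q| = b) :
    (p*x + q*y)^2 ≤ (a+b)*(a*x^2 + b*y^2) := by
  have h0 : |p*x + q*y| ≤ a*|x| + b*|y| := by
    calc |p*x + q*y| ≤ |p*x| + |q*y| := abs_add_le _ _
    _ = a*|x| + b*|y| := by rw [abs_mul, abs_mul, ha, hb]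
  have ha0 : 0 ≤ a := ha ▸ abs_nonneg p
  have hb0 : 0 ≤ b := hb ▸ abs_nonneg q
  have h1 : (p*x+q*y)^2 ≤ (a*|x| + b*|y|)^2 := by
    rw [← sq_abs (p*x+q*y)]
    exact pow_le_pow_left₀ (abs_nonneg _) h0 2
  have h2 : (a*|x| + b*|y|)^2 ≤ (a+b)*(a*|x|^2 + b*|y|^2) := by
    nlinarith [mul_nonneg (mul_nonneg ha0 hb0) (sq_nonneg (|x| - |y|))]
  rw [sq_abs, sq_abs] at h2
  linarith

lemma sigmaMax_le_bound (s11 s12 s21 s22 M : ℝ)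
    (h1 : |s11| + |s12| ≤ M) (h2 : |s11| + |s21| ≤ M)
    (h3 : |s22| + |s12| ≤ M) (h4 : |s22| + |s21| ≤ M) :
    sigmaMax !![s11, s12; s21, s22] ≤ M := by
  have hM : 0 ≤ M := le_trans (by positivity) h1
  apply ContinuousLinearMap.opNorm_le_bound _ hM
  intro x
  set a := |s11|; set b := |s12|; set c := |s21|; set d := |s22|
  have hx : Matrix.toEuclideanCLM (𝕜 := ℝ) !![s11, s12; s21, s22] x =
      (WithLp.equiv _ _).symm (Matrix.toLin' !![s11, s12; s21, s22] (WithLp.equiv _ _ x)) := rfl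
  rw [hx]
  rw [EuclideanSpace.norm_eq, EuclideanSpace.norm_eq]
  set u := x 0 with hu
  set v := x 1 with hv
  have e0 : ((WithLp.equiv _ _).symm (Matrix.toLin' !![s11, s12; s21, s22] (WithLp.equiv _ _ x)) : EuclideanSpace ℝ (Fin 2)) 0 = s11*u + s12*v := by
    simp [Matrix.toLin'_apply, Matrix.mulVec, dotProduct, Matrix.vecHead, Matrix.vecTail, Fin.sum_univ_two, hu, hv]
  have e1 : ((WithLp.equiv _ _).symm (Matrix.toLin' !![s11, s12; s21, s22] (WithLp.equiv _ _ x)) : EuclideanSpace ℝ (Fin 2)) 1 = s21*u + s22*v := by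
    simp [Matrix.toLin'_apply, Matrix.mulVec, dotProduct, Matrix.vecHead, Matrix.vecTail, Fin.sum_univ_two, hu, hv]
  rw [Fin.sum_univ_two, Fin.sum_univ_two, e0, e1]
  have c1 : (s11*u + s12*v)^2 ≤ (a+b)*(a*u^2 + b*v^2) := cs_step a b u v s11 s12 rfl rfl
  have c2 : (s21*u + s22*v)^2 ≤ (c+d)*(c*u^2 + d*v^2) := cs_step c d u v s21 s22 rfl rfl
  have ha0 : 0 ≤ a := abs_nonneg _
  have hb0 : 0 ≤ b := abs_nonneg _
  have hc0 : 0 ≤ c := abs_nonneg _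
  have hd0 : 0 ≤ d := abs_nonneg _
  have key : (s11*u + s12*v)^2 + (s21*u + s22*v)^2 ≤ M^2 * (u^2 + v^2) := by
    have t1 : (a+b)*(a*u^2 + b*v^2) ≤ M*(a*u^2 + b*v^2) :=
      mul_le_mul_of_nonneg_right h1 (by positivity)
    have t2 : (c+d)*(c*u^2 + d*v^2) ≤ M*(c*u^2 + d*v^2) :=
      mul_le_mul_of_nonneg_right (by linarith : c + d ≤ M) (by positivity)
    have t3 : M*((a+c)*u^2) ≤ M*(M*u^2) :=
      mul_le_mul_of_nonneg_left (mul_le_mul_of_nonneg_right h2 (sq_nonneg u)) hM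
    have t4 : M*((b+d)*v^2) ≤ M*(M*v^2) :=
      mul_le_mul_of_nonneg_left (mul_le_mul_of_nonneg_right (by linarith : b + d ≤ M) (sq_nonneg v)) hM
    nlinarith [t1, t2, t3, t4]
  calc Real.sqrt (‖s11*u + s12*v‖^2 + ‖s21*u + s22*v‖^2)
      = Real.sqrt ((s11*u + s12*v)^2 + (s21*u + s22*v)^2) := by rw [Real.norm_eq_abs, Real.norm_eq_abs, sq_abs, sq_abs]
    _ ≤ Real.sqrt (M^2 * (u^2 + v^2)) := Real.sqrt_le_sqrt key
    _ = M * Real.sqrt (u^2 + v^2) := by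
        rw [Real.sqrt_mul (sq_nonneg M), Real.sqrt_sq hM]
    _ = M * Real.sqrt (‖u‖^2 + ‖v‖^2) := by rw [Real.norm_eq_abs, Real.norm_eq_abs, sq_abs, sq_abs]

/-- If `(k₁, k₂)` satisfy the design inequalities, then for all `h ∈ (0, h̄)`
and `λ ∈ [λ₂, λ_N]`, the transformed matrix `Ŝ(h,λ)` satisfies the
Gershgorin-type bound `max{|s₁₁|+|s₁₂|, |s₁₁|+|s₂₁|, |s₂₂|+|s₁₂|, |s₂₂|+|s₂₁|} < 1`,
and hence `σ̄(Ŝ(h,λ)) < 1`. -/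
theorem stmt15 (hbar lam2 lamN mu1 mu2 k₁ k₂ : ℝ)
    (hh : 0 < hbar) (hl2 : 0 < lam2) (hlN : lam2 ≤ lamN)
    (hm1 : 0 < mu1) (hm : mu1 < mu2)
    (hk1u : 2 * (mu2 - mu1) / (hbar * lamN * (mu1 + mu2 + hbar)) > k₁)
    (hk1l : k₁ > 0)
    (hk2u : min (2 / (hbar * lamN)) (4 / (lamN * (2 * mu1 + hbar))) > k₂)
    (hk2l : k₂ > 4 / (lam2 * (mu1 + mu2)))
    (hdu : 4 / (lamN * (mu1 + mu2 + hbar)) > k₂ - k₁)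
    (hdl : k₂ - k₁ > 0) :
    ∀ h ∈ Set.Ioo (0 : ℝ) hbar, ∀ lam ∈ Set.Icc lam2 lamN,
      let γ := (mu1 + mu2 + h) / (mu2 - mu1)
      let s11 := 1 - h * lam * γ * k₁ / 2
      let s12 := 2 * h / (mu2 - mu1) - h * lam * γ * k₂ / 2
      let s21 := -(h * lam * k₁ / 2)
      let s22 := 1 - h * lam * k₂ / 2
      max (max (|s11| + |s12|) (|s11| + |s21|)) (max (|s22| + |s12|) (|s22| + |s21|)) < 1 ∧
      sigmaMax !![s11, s12; s21, s22] < 1 := by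
  intro h hmem lam lmem
  obtain ⟨hh0, hhb⟩ := hmem
  obtain ⟨hll, hlu⟩ := lmem
  intro γ s11 s12 s21 s22
  have hd : (0:ℝ) < mu2 - mu1 := by linarith
  have hlampos : 0 < lam := lt_of_lt_of_le hl2 hll
  have hlamN : 0 < lamN := lt_of_lt_of_le hl2 hlN
  have hmu : (0:ℝ) < mu1 + mu2 := by linarith
  have hγ : γ = (mu1 + mu2 + h) / (mu2 - mu1) := rfl
  have hγpos : 0 < γ := div_pos (by linarith) hd
  -- k₂ > 0
  have hk2pos : 0 < k₂ := lt_trans (by positivity) hk2l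
  -- hypotheses without division
  have P1 : k₁ * (hbar * lamN * (mu1 + mu2 + hbar)) < 2 * (mu2 - mu1) := by
    rw [gt_iff_lt, lt_div_iff₀ (by positivity)] at hk1u; exact hk1u
  have P2a : k₂ * (hbar * lamN) < 2 := by
    have := lt_of_lt_of_le hk2u (min_le_left _ _)
    rw [lt_div_iff₀ (by positivity)] at this; exact this
  have P2b : k₂ * (lamN * (2 * mu1 + hbar)) < 4 := by
    have := lt_of_lt_of_le hk2u (min_le_right _ _)
    rw [lt_div_iff₀ (by positivity)] at this; exact this
  have P3 : 4 < k₂ * (lam2 * (mu1 + mu2)) := by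
    rw [gt_iff_lt, div_lt_iff₀ (by positivity)] at hk2l; exact hk2l
  have P4 : (k₂ - k₁) * (lamN * (mu1 + mu2 + hbar)) < 4 := by
    rw [gt_iff_lt, lt_div_iff₀ (by positivity)] at hdu; exact hdu
  -- core product inequalities at (h, lam)
  have e1 : h * lam ≤ hbar * lamN := mul_le_mul hhb.le hlu hlampos.le hh.le
  have e2 : h * lam * (mu1 + mu2 + h) ≤ hbar * lamN * (mu1 + mu2 + hbar) :=
    mul_le_mul e1 (by linarith) (by linarith) (by positivity)
  have Q1 : h * lam * (mu1 + mu2 + h) * k₁ < 2 * (mu2 - mu1) := by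
    linarith [mul_le_mul_of_nonneg_right e2 hk1l.le]
  have Q2 : h * lam * k₂ < 2 := by
    linarith [mul_le_mul_of_nonneg_right e1 hk2pos.le]
  have e3 : lam * (2 * mu1 + h) ≤ lamN * (2 * mu1 + hbar) :=
    mul_le_mul hlu (by linarith) (by linarith) hlamN.le
  have Q3 : lam * k₂ * (2 * mu1 + h) < 4 := by
    linarith [mul_le_mul_of_nonneg_right e3 hk2pos.le]
  have e4 : lam * (mu1 + mu2 + h) ≤ lamN * (mu1 + mu2 + hbar) :=
    mul_le_mul hlu (by linarith) (by linarith) hlamN.le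
  have Q4 : lam * (mu1 + mu2 + h) * (k₂ - k₁) < 4 := by
    linarith [mul_le_mul_of_nonneg_right e4 hdl.le]
  have Q5 : 4 < lam * (mu1 + mu2 + h) * k₂ := by
    have e5 : lam2 * (mu1 + mu2) ≤ lam * (mu1 + mu2 + h) :=
      mul_le_mul hll (by linarith) hmu.le hlampos.le
    linarith [mul_le_mul_of_nonneg_right e5 hk2pos.le]
  -- abs values
  have hA : h * lam * γ * k₁ / 2 = h * lam * (mu1 + mu2 + h) * k₁ / (2 * (mu2 - mu1)) := by
    rw [hγ]; field_simp
  have hApos : 0 < h * lam * γ * k₁ / 2 := by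
    have := mul_pos (mul_pos (mul_pos hh0 hlampos) hγpos) hk1l; linarith
  have hAlt : h * lam * γ * k₁ / 2 < 1 := by
    rw [hA, div_lt_one (by positivity)]; linarith
  have habs11 : |s11| = 1 - h * lam * γ * k₁ / 2 := by
    show |1 - h * lam * γ * k₁ / 2| = _
    rw [abs_of_pos]; linarith
  have hDpos : 0 < h * lam * k₂ / 2 := by positivity
  have hDlt : h * lam * k₂ / 2 < 1 := by linarith
  have habs22 : |s22| = 1 - h * lam * k₂ / 2 := by
    show |1 - h * lam * k₂ / 2| = _
    rw [abs_of_pos]; linarith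
  have habs21 : |s21| = h * lam * k₁ / 2 := by
    show |-(h * lam * k₁ / 2)| = _
    rw [abs_neg, abs_of_pos (by positivity)]
  have hs12eq : s12 = (4 * h - h * lam * (mu1 + mu2 + h) * k₂) / (2 * (mu2 - mu1)) := by
    show 2 * h / (mu2 - mu1) - h * lam * γ * k₂ / 2 = _
    rw [hγ]; field_simp; ring
  have hs12neg : s12 < 0 := by
    rw [hs12eq]
    apply div_neg_of_neg_of_pos _ (by positivity)
    linarith [mul_lt_mul_of_pos_left Q5 hh0]
  have habs12 : |s12| = h * lam * γ * k₂ / 2 - 2 * h / (mu2 - mu1) := by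
    rw [abs_of_neg hs12neg]
    show -(2 * h / (mu2 - mu1) - h * lam * γ * k₂ / 2) = _
    ring
  have hB : h * lam * γ * k₂ / 2 = h * lam * (mu1 + mu2 + h) * k₂ / (2 * (mu2 - mu1)) := by
    rw [hγ]; field_simp
  -- the four sums
  have E1 : |s11| + |s12| < 1 := by
    rw [habs11, habs12]
    have key : h * lam * γ * k₂ / 2 - h * lam * γ * k₁ / 2 - 2 * h / (mu2 - mu1) =
        (h * lam * (mu1 + mu2 + h) * (k₂ - k₁) - 4 * h) / (2 * (mu2 - mu1)) := by
      rw [hγ]; field_simp; ring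
    have : h * lam * γ * k₂ / 2 - h * lam * γ * k₁ / 2 - 2 * h / (mu2 - mu1) < 0 := by
      rw [key]
      apply div_neg_of_neg_of_pos _ (by positivity)
      linarith [mul_lt_mul_of_pos_left Q4 hh0]
    linarith
  have E2 : |s11| + |s21| < 1 := by
    rw [habs11, habs21]
    have key : h * lam * k₁ / 2 - h * lam * γ * k₁ / 2 =
        (-(h * lam * k₁ * (2 * mu1 + h))) / (2 * (mu2 - mu1)) := by
      rw [hγ]; field_simp; ring
    have : h * lam * k₁ / 2 - h * lam * γ * k₁ / 2 < 0 := by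
      rw [key]
      apply div_neg_of_neg_of_pos _ (by positivity)
      have := mul_pos (mul_pos (mul_pos hh0 hlampos) hk1l) (show (0:ℝ) < 2 * mu1 + h by linarith)
      linarith
    linarith
  have E3 : |s22| + |s12| < 1 := by
    rw [habs22, habs12]
    have key : h * lam * γ * k₂ / 2 - h * lam * k₂ / 2 - 2 * h / (mu2 - mu1) =
        (h * (lam * k₂ * (2 * mu1 + h)) - 4 * h) / (2 * (mu2 - mu1)) := by
      rw [hγ]; field_simp; ring
    have : h * lam * γ * k₂ / 2 - h * lam * k₂ / 2 - 2 * h / (mu2 - mu1) < 0 := by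
      rw [key]
      apply div_neg_of_neg_of_pos _ (by positivity)
      linarith [mul_lt_mul_of_pos_left Q3 hh0]
    linarith
  have E4 : |s22| + |s21| < 1 := by
    rw [habs22, habs21]
    linarith [mul_pos (mul_pos hh0 hlampos) hdl]
  have hmax : max (max (|s11| + |s12|) (|s11| + |s21|)) (max (|s22| + |s12|) (|s22| + |s21|)) < 1 :=
    max_lt (max_lt E1 E2) (max_lt E3 E4)
  refine ⟨hmax, lt_of_le_of_lt ?_ hmax⟩
  exact sigmaMax_le_bound s11 s12 s21 s22 _
    (le_trans (le_max_left _ _) (le_max_left _ _))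
    (le_trans (le_max_right _ _) (le_max_left _ _))
    (le_trans (le_max_left _ _) (le_max_right _ _))
    (le_trans (le_max_right _ _) (le_max_right _ _))
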